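/- Let K be an invertible adjointable operator on H and Λ_{CC'} = {W_j, Λ_j, v_j} a (C,C')-controlled g-fusion frame with bounds A, B and frame operator S = S_{(C,C')}. Set T = K S⁻¹ and assume T*T W_j ⊆ W_j for all j and that C, C' commute with T. Then {K S⁻¹ W_j, Λ_j P_{W_j} S⁻¹ K*, v_j}_{j∈J} is a (C,C')-controlled K-g-fusion frame for H with bounds A/B² and (B/A²)‖K‖², and its associated (C,C')-controlled g-fusion frame operator is K S⁻¹ K*. -/

import Mathlib

open scoped RightActions

noncomputable section

/-- The `C⋆`-module class as it stood in the older Mathlib (right action of `Aᵐᵒᵖ`). -/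
class CStarModuleOld (A E : Type*) [NonUnitalSemiring A] [StarRing A] [Module ℂ A]
    [AddCommGroup E] [Module ℂ E] [PartialOrder A] [SMul Aᵐᵒᵖ E] [Norm A] [Norm E]
    extends Inner A E where
  inner_add_right {x y z : E} : inner x (y + z) = inner x y + inner x z
  inner_self_nonneg {x : E} : 0 ≤ inner x x
  inner_self {x : E} : inner x x = 0 ↔ x = 0
  inner_op_smul_right {a : A} {x y : E} : inner x (MulOpposite.op a • y) = inner x y * a
  inner_smul_right_complex {z : ℂ} {x y : E} : inner x (z • y) = z • inner x y
  star_inner (x y : E) : star (inner x y) = inner y x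
  norm_eq_sqrt_norm_inner_self (x : E) : ‖x‖ = √‖inner x x‖

variable {A : Type*} [CStarAlgebra A] [PartialOrder A] [StarOrderedRing A]
variable {H : Type*} [NormedAddCommGroup H] [NormedSpace ℂ H] [SMul Aᵐᵒᵖ H] [CStarModuleOld A H]
variable {J : Type*} {Hs : J → Type*} [∀ j, NormedAddCommGroup (Hs j)]
  [∀ j, NormedSpace ℂ (Hs j)] [∀ j, SMul Aᵐᵒᵖ (Hs j)] [∀ j, CStarModuleOld A (Hs j)]

namespace CStarModuleOld

section helpers

variable {E : Type*} [NormedAddCommGroup E] [NormedSpace ℂ E] [SMul Aᵐᵒᵖ E] [CStarModuleOld A E]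

lemma inner_zero_right {x : E} : inner A x 0 = 0 := by
  have := CStarModuleOld.inner_add_right (A := A) (x := x) (y := 0) (z := 0)
  simpa using this

lemma inner_zero_left {x : E} : inner A 0 x = 0 := by
  rw [← CStarModuleOld.star_inner (A := A) x 0, inner_zero_right, star_zero]

lemma inner_sub_right {x y z : E} : inner A x (y - z) = inner A x y - inner A x z := by
  rw [eq_sub_iff_add_eq, ← CStarModuleOld.inner_add_right, sub_add_cancel]

lemma inner_sub_left {x y z : E} : inner A (x - y) z = inner A x z - inner A y z := by
  rw [← CStarModuleOld.star_inner (A := A) z (x - y), inner_sub_right, star_sub,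
    CStarModuleOld.star_inner, CStarModuleOld.star_inner]

lemma inner_op_smul_left {a : A} {x y : E} : inner A (x <• a) y = star a * inner A x y := by
  rw [← CStarModuleOld.star_inner (A := A) y, CStarModuleOld.inner_op_smul_right, star_mul,
    CStarModuleOld.star_inner]

lemma inner_smul_right_real {z : ℝ} {x y : E} : inner A x (z • y) = z • inner A x y := by
  have h₁ : z • y = (z : ℂ) • y := by simp
  rw [h₁, CStarModuleOld.inner_smul_right_complex]
  simp

lemma inner_smul_left_real {z : ℝ} {x y : E} : inner A (z • x) y = z • inner A x y := by
  have h₁ : z • x = (z : ℂ) • x := by simp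
  rw [h₁, ← CStarModuleOld.star_inner (A := A) y, CStarModuleOld.inner_smul_right_complex]
  simp [CStarModuleOld.star_inner]

lemma inner_mul_inner_swap_le {x y : E} :
    inner A y x * inner A x y ≤ ‖x‖ ^ 2 • inner A y y := by
  rcases eq_or_ne x 0 with h | h
  · subst h
    simp [inner_zero_left, inner_zero_right]
  · have h₁ : ∀ (a : A),
        (0 : A) ≤ ‖x‖ ^ 2 • (star a * a) - ‖x‖ ^ 2 • (inner A y x * a)
                  - ‖x‖ ^ 2 • (star a * inner A x y) + ‖x‖ ^ 2 • (‖x‖ ^ 2 • inner A y y) :=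
        fun a => by
      calc (0 : A) ≤ inner A (x <• a - ‖x‖ ^ 2 • y) (x <• a - ‖x‖ ^ 2 • y) := by
                      exact CStarModuleOld.inner_self_nonneg
            _ = star a * inner A x x * a - ‖x‖ ^ 2 • (inner A y x * a)
                  - ‖x‖ ^ 2 • (star a * inner A x y) + ‖x‖ ^ 2 • (‖x‖ ^ 2 • inner A y y) := by
                      simp only [inner_sub_right, CStarModuleOld.inner_op_smul_right,
                        inner_sub_left, inner_op_smul_left, inner_smul_left_real, sub_mul,
                        smul_mul_assoc, mul_smul_comm, inner_smul_right_real, smul_sub, mul_assoc]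
                      abel
            _ ≤ ‖x‖ ^ 2 • (star a * a) - ‖x‖ ^ 2 • (inner A y x * a)
                  - ‖x‖ ^ 2 • (star a * inner A x y) + ‖x‖ ^ 2 • (‖x‖ ^ 2 • inner A y y) := by
                      gcongr
                      calc _ ≤ ‖inner A x x‖ • (star a * a) :=
                          CStarAlgebra.star_left_conjugate_le_norm_smul
                            (.of_nonneg CStarModuleOld.inner_self_nonneg)
                        _ = (√‖inner A x x‖) ^ 2 • (star a * a) := by
                          rw [Real.sq_sqrt]
                          positivity
                        _ = ‖x‖ ^ 2 • (star a * a) := by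
                          rw [← CStarModuleOld.norm_eq_sqrt_norm_inner_self]
    specialize h₁ (inner A x y)
    simp only [CStarModuleOld.star_inner, sub_self, zero_sub, le_neg_add_iff_add_le,
      add_zero] at h₁
    rwa [smul_le_smul_iff_of_pos_left (pow_pos (norm_pos_iff.mpr h) _)] at h₁

variable (E) in
lemma norm_inner_le {x y : E} : ‖inner A x y‖ ≤ ‖x‖ * ‖y‖ := by
  have e1 : ‖inner A x y‖ ^ 2 = ‖inner A y x * inner A x y‖ := by
    rw [← CStarModuleOld.star_inner (A := A) x y, CStarRing.norm_star_mul_self, pow_two]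
  have e2 : ‖inner A y x * inner A x y‖ ≤ ‖(‖x‖ ^ 2 • inner A y y)‖ := by
    refine CStarAlgebra.norm_le_norm_of_nonneg_of_le ?_ inner_mul_inner_swap_le
    rw [← CStarModuleOld.star_inner (A := A) x y]
    exact star_mul_self_nonneg _
  have e3 : ‖(‖x‖ ^ 2 • inner A y y)‖ = ‖x‖ ^ 2 * ‖inner A y y‖ := by
    rw [norm_smul, Real.norm_of_nonneg (by positivity)]
  have e4 : ‖x‖ ^ 2 * ‖inner A y y‖ = ‖x‖ ^ 2 * ‖y‖ ^ 2 := by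
    rw [CStarModuleOld.norm_eq_sqrt_norm_inner_self (A := A) y, Real.sq_sqrt (norm_nonneg _)]
  have : ‖inner A x y‖ ^ 2 ≤ (‖x‖ * ‖y‖) ^ 2 := by
    rw [e1, mul_pow, ← e4, ← e3]
    exact e2
  exact (pow_le_pow_iff_left₀ (norm_nonneg _) (by positivity) (by norm_num : (2:ℕ) ≠ 0)).mp this

end helpers

end CStarModuleOld

set_option linter.unusedSectionVars false in
lemma my_inner_ext (x y : H) (h : ∀ z : H, (inner A x z : A) = inner A y z) : x = y := by
  have h0 : (inner A (x - y) (x - y) : A) = 0 := by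
    rw [CStarModuleOld.inner_sub_left, h (x - y), sub_self]
  exact sub_eq_zero.mp (CStarModuleOld.inner_self.mp h0)

lemma my_adjoint_flip (K Kad : H →L[ℂ] H)
    (hKad : ∀ x y : H, (inner A (K x) y : A) = inner A x (Kad y)) :
    ∀ u z : H, (inner A (Kad u) z : A) = inner A u (K z) := by
  intro u z
  rw [← CStarModuleOld.star_inner, ← hKad, CStarModuleOld.star_inner]

lemma my_adjoint_module (K Kad : H →L[ℂ] H)
    (hKad : ∀ x y : H, (inner A (K x) y : A) = inner A x (Kad y)) (t : A) (x : H) :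
    Kad (x <• t) = (Kad x) <• t := by
  apply my_inner_ext (A := A)
  intro z
  rw [my_adjoint_flip K Kad hKad, CStarModuleOld.inner_op_smul_left,
    CStarModuleOld.inner_op_smul_left, my_adjoint_flip K Kad hKad]

lemma my_adjoint_norm_le (K Kad : H →L[ℂ] H)
    (hKad : ∀ x y : H, (inner A (K x) y : A) = inner A x (Kad y)) (u : H) :
    ‖Kad u‖ ≤ ‖K‖ * ‖u‖ := by
  have h1 : ‖Kad u‖ ^ 2 = ‖(inner A (Kad u) (Kad u) : A)‖ := by
    rw [CStarModuleOld.norm_eq_sqrt_norm_inner_self (A := A) (x := Kad u)]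
    exact Real.sq_sqrt (norm_nonneg _)
  have h2 : ‖(inner A (Kad u) (Kad u) : A)‖ ≤ ‖u‖ * (‖K‖ * ‖Kad u‖) := by
    rw [my_adjoint_flip K Kad hKad]
    calc ‖(inner A u (K (Kad u)) : A)‖ ≤ ‖u‖ * ‖K (Kad u)‖ := CStarModuleOld.norm_inner_le H
      _ ≤ ‖u‖ * (‖K‖ * ‖Kad u‖) := by
          gcongr
          exact K.le_opNorm _
  rcases eq_or_lt_of_le (norm_nonneg (Kad u)) with h | h
  · rw [← h]; positivity
  · have h3 : ‖Kad u‖ * ‖Kad u‖ ≤ (‖K‖ * ‖u‖) * ‖Kad u‖ := by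
      calc ‖Kad u‖ * ‖Kad u‖ = ‖Kad u‖ ^ 2 := (sq _).symm
        _ = ‖(inner A (Kad u) (Kad u) : A)‖ := h1
        _ ≤ ‖u‖ * (‖K‖ * ‖Kad u‖) := h2
        _ = (‖K‖ * ‖u‖) * ‖Kad u‖ := by ring
    exact le_of_mul_le_mul_right h3 h

lemma my_key_bound (K Kad : H →L[ℂ] H)
    (hKad : ∀ x y : H, (inner A (K x) y : A) = inner A x (Kad y)) (f : H) :
    (inner A (Kad f) (Kad f) : A) ≤ (‖K‖ ^ 2 : ℝ) • (inner A f f : A) := by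
  set q : A := inner A (Kad f) (Kad f) with hq
  set p : A := inner A f f with hp
  have hp0 : 0 ≤ p := CStarModuleOld.inner_self_nonneg
  have hq0 : 0 ≤ q := CStarModuleOld.inner_self_nonneg
  -- main step: ∀ δ > 0, q ≤ ‖K‖^2 • p + δ • 1
  have main : ∀ δ : ℝ, 0 < δ → q ≤ (‖K‖ ^ 2 : ℝ) • p + δ • 1 := by
    intro δ hδ
    set ε : ℝ := δ / (‖K‖ ^ 2 + 1) with hε
    have hεpos : 0 < ε := by positivity
    have hsa : IsSelfAdjoint p := .of_nonneg hp0
    have hspec : ∀ x ∈ spectrum ℝ p, 0 ≤ x := fun x hx => spectrum_nonneg_of_nonneg hp0 hx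
    set g1 : ℝ → ℝ := fun x => Real.sqrt (x + ε) with hg1
    set g2 : ℝ → ℝ := fun x => (Real.sqrt (x + ε))⁻¹ with hg2
    have hc1 : ContinuousOn g1 (spectrum ℝ p) :=
      (Real.continuous_sqrt.comp (by continuity)).continuousOn
    have hc2 : ContinuousOn g2 (spectrum ℝ p) := by
      apply ContinuousOn.inv₀
      · exact (Real.continuous_sqrt.comp (by continuity)).continuousOn
      · intro x hx
        have := hspec x hx
        positivity
    set s : A := cfc g1 p with hs
    set t : A := cfc g2 p with ht
    have hst : s * t = 1 := by
      rw [hs, ht, ← cfc_mul g1 g2 p hc1 hc2]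
      have he : (spectrum ℝ p).EqOn (fun x => g1 x * g2 x) (fun _ => 1) := by
        intro x hx
        have hx0 := hspec x hx
        have hne : Real.sqrt (x + ε) ≠ 0 := by positivity
        simp [hg1, hg2, mul_inv_cancel₀ hne]
      rw [cfc_congr he, cfc_const_one ℝ p]
    have hts : t * s = 1 := by
      rw [hs, ht, ← cfc_mul g2 g1 p hc2 hc1]
      have he : (spectrum ℝ p).EqOn (fun x => g2 x * g1 x) (fun _ => 1) := by
        intro x hx
        have hx0 := hspec x hx
        have hne : Real.sqrt (x + ε) ≠ 0 := by positivity
        simp [hg1, hg2, inv_mul_cancel₀ hne]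
      rw [cfc_congr he, cfc_const_one ℝ p]
    have hss : s * s = p + ε • 1 := by
      rw [hs, ← cfc_mul g1 g1 p hc1 hc1]
      have he : (spectrum ℝ p).EqOn (fun x => g1 x * g1 x) (fun x => x + ε) := by
        intro x hx
        have hx0 := hspec x hx
        exact Real.mul_self_sqrt (by linarith)
      rw [cfc_congr he,
        cfc_add (a := p) (fun x => x) (fun _ => ε) (by fun_prop) (by fun_prop),
        cfc_id' ℝ p, cfc_const ε p]
      rw [Algebra.algebraMap_eq_smul_one]
    have hs_sa : IsSelfAdjoint s := cfc_predicate g1 p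
    have ht_sa : IsSelfAdjoint t := cfc_predicate g2 p
    set g : H := f <• t with hg
    have hgg : (inner A g g : A) = t * p * t := by
      rw [hg, CStarModuleOld.inner_op_smul_left, CStarModuleOld.inner_op_smul_right, ht_sa.star_eq,
        ← hp, mul_assoc]
    have hgle : (inner A g g : A) ≤ 1 := by
      rw [hgg]
      calc t * p * t ≤ t * (p + ε • 1) * t := by
            have := star_left_conjugate_le_conjugate (le_add_of_nonneg_right
              (smul_nonneg hεpos.le zero_le_one) : p ≤ p + ε • 1) t
            rwa [ht_sa.star_eq] at this
        _ = (t * s) * (s * t) := by rw [← hss]; noncomm_ring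
        _ = 1 := by rw [hts, hst, one_mul]
    have hgnorm : ‖g‖ ≤ 1 := by
      rw [CStarModuleOld.norm_eq_sqrt_norm_inner_self (A := A) (x := g)]
      have : ‖(inner A g g : A)‖ ≤ 1 :=
        (CStarAlgebra.norm_le_one_iff_of_nonneg _ CStarModuleOld.inner_self_nonneg).mpr hgle
      calc Real.sqrt ‖(inner A g g : A)‖ ≤ Real.sqrt 1 := Real.sqrt_le_sqrt this
        _ = 1 := Real.sqrt_one
    -- bound inner A (Kad g) (Kad g) ≤ ‖K‖^2 • 1
    have hx0 : (0:A) ≤ inner A (Kad g) (Kad g) := CStarModuleOld.inner_self_nonneg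
    have hbound : (inner A (Kad g) (Kad g) : A) ≤ (‖K‖ ^ 2 : ℝ) • 1 := by
      have h1 : (inner A (Kad g) (Kad g) : A) ≤ ‖(inner A (Kad g) (Kad g) : A)‖ • 1 := by
        have := IsSelfAdjoint.le_algebraMap_norm_self (a := (inner A (Kad g) (Kad g) : A))
          (.of_nonneg hx0)
        rwa [Algebra.algebraMap_eq_smul_one] at this
      refine h1.trans (smul_le_smul_of_nonneg_right ?_ zero_le_one)
      have h2 : ‖(inner A (Kad g) (Kad g) : A)‖ ≤ ‖Kad g‖ * ‖Kad g‖ := CStarModuleOld.norm_inner_le H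
      have h3 : ‖Kad g‖ ≤ ‖K‖ := by
        calc ‖Kad g‖ ≤ ‖K‖ * ‖g‖ := my_adjoint_norm_le K Kad hKad g
          _ ≤ ‖K‖ * 1 := mul_le_mul_of_nonneg_left hgnorm (norm_nonneg _)
          _ = ‖K‖ := mul_one _
      calc ‖(inner A (Kad g) (Kad g) : A)‖ ≤ ‖Kad g‖ * ‖Kad g‖ := h2
        _ ≤ ‖K‖ * ‖K‖ := by
            have := norm_nonneg (Kad g)
            exact mul_le_mul h3 h3 this (norm_nonneg K)
        _ = ‖K‖ ^ 2 := (sq ‖K‖).symm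
    have hKg : (inner A (Kad g) (Kad g) : A) = t * q * t := by
      rw [hg, my_adjoint_module K Kad hKad, CStarModuleOld.inner_op_smul_left,
        CStarModuleOld.inner_op_smul_right, ht_sa.star_eq, ← hq, mul_assoc]
    rw [hKg] at hbound
    -- conjugate back by s
    have hconj : s * (t * q * t) * s ≤ s * ((‖K‖ ^ 2 : ℝ) • 1) * s := by
      have := star_left_conjugate_le_conjugate hbound s
      rwa [hs_sa.star_eq] at this
    have hL : s * (t * q * t) * s = q := by
      have : s * (t * q * t) * s = (s * t) * q * (t * s) := by noncomm_ring
      rw [this, hst, hts, one_mul, mul_one]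
    have hR : s * ((‖K‖ ^ 2 : ℝ) • 1) * s = (‖K‖ ^ 2 : ℝ) • (p + ε • 1) := by
      rw [mul_smul_comm, mul_one, smul_mul_assoc, hss]
    rw [hL, hR] at hconj
    calc q ≤ (‖K‖ ^ 2 : ℝ) • (p + ε • 1) := hconj
      _ = (‖K‖ ^ 2 : ℝ) • p + (‖K‖ ^ 2 * ε) • 1 := by
          rw [smul_add, smul_smul]
      _ ≤ (‖K‖ ^ 2 : ℝ) • p + δ • 1 := by
          refine add_le_add_right (smul_le_smul_of_nonneg_right ?_ zero_le_one) _
          have hpos : (0:ℝ) < ‖K‖ ^ 2 + 1 := by positivity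
          rw [hε, mul_div_assoc', div_le_iff₀ hpos]
          nlinarith [hδ.le, sq_nonneg ‖K‖]
    -- done
  -- take the limit δ → 0⁺
  have cont : Filter.Tendsto (fun δ : ℝ => (‖K‖ ^ 2 : ℝ) • p + δ • (1:A))
      (nhdsWithin 0 (Set.Ioi 0)) (nhds ((‖K‖ ^ 2 : ℝ) • p)) := by
    have h1 : Continuous fun δ : ℝ => (‖K‖ ^ 2 : ℝ) • p + δ • (1:A) := by continuity
    have := (h1.tendsto 0).mono_left (nhdsWithin_le_nhds (s := Set.Ioi (0:ℝ)))
    simpa using this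
  exact ge_of_tendsto cont (Filter.eventually_of_mem self_mem_nhdsWithin
    (fun δ hδ => main δ hδ))


/-- for invertible `K` and a `(C,C')`-controlled g-fusion frame with
frame operator `S`, setting `T = KS⁻¹` with `T*TW_j ⊆ W_j` and `C, C'` commuting
with `T`, the family `{KS⁻¹W_j, Λ_jP_{W_j}S⁻¹K*, v_j}` is a `(C,C')`-controlled
`K`-g-fusion frame with bounds `A/B²`, `(B/A²)‖K‖²`, and its frame operator is
`KS⁻¹K*`. -/
theorem controlled_K_g_fusion_frame_dual_type
    (C C' : H →L[ℂ] H) (P : J → H →L[ℂ] H) (Λ : ∀ j, H →L[ℂ] Hs j)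
    (Λad : ∀ j, Hs j →L[ℂ] H) (v : J → A)
    (hΛad : ∀ (j) (x : H) (u : Hs j), (inner A (Λ j x) u : A) = inner A x (Λad j u))
    (hP_idem : ∀ j, (P j).comp (P j) = P j)
    (hP_sa : ∀ (j) (f g : H), (inner A (P j f) g : A) = inner A f (P j g))
    (hC_sa : ∀ f g : H, (inner A (C f) g : A) = inner A f (C g))
    (hC'_sa : ∀ f g : H, (inner A (C' f) g : A) = inner A f (C' g))
    (hC_pos : ∀ f : H, 0 ≤ (inner A (C f) f : A))
    (hC'_pos : ∀ f : H, 0 ≤ (inner A (C' f) f : A))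
    (hC_inv : Function.Bijective C) (hC'_inv : Function.Bijective C')
    (hCC' : C.comp C' = C'.comp C)
    (hCT : ∀ j, C.comp ((P j).comp ((Λad j).comp ((Λ j).comp (P j))))
      = ((P j).comp ((Λad j).comp ((Λ j).comp (P j)))).comp C)
    (hC'T : ∀ j, C'.comp ((P j).comp ((Λad j).comp ((Λ j).comp (P j))))
      = ((P j).comp ((Λad j).comp ((Λ j).comp (P j)))).comp C')
    (hv_pos : ∀ j, 0 ≤ v j) (hv_inv : ∀ j, IsUnit (v j))
    (hv_central : ∀ (j) (a : A), Commute (v j) a)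
    (a b : ℝ) (ha : 0 < a) (hab : a ≤ b)
    (hsum : ∀ f : H, Summable fun j =>
      v j * v j * (inner A (Λ j (P j (C f))) (Λ j (P j (C' f))) : A))
    (hframe : ∀ f : H,
      a • (inner A f f : A) ≤
        (∑' j, v j * v j * (inner A (Λ j (P j (C f))) (Λ j (P j (C' f))) : A)) ∧
      (∑' j, v j * v j * (inner A (Λ j (P j (C f))) (Λ j (P j (C' f))) : A)) ≤
        b • (inner A f f : A))
    (K Kad : H →L[ℂ] H)
    (hKad : ∀ x y : H, (inner A (K x) y : A) = inner A x (Kad y))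
    (hK_inv : Function.Bijective K)
    (S : H →L[ℂ] H)
    (hS : ∀ f g : H, (inner A (S f) g : A) =
      ∑' j, v j * v j * (inner A (Λ j (P j (C f))) (Λ j (P j (C' g))) : A))
    (Sinv : H →L[ℂ] H)
    (hSinv₁ : S.comp Sinv = ContinuousLinearMap.id ℂ H)
    (hSinv₂ : Sinv.comp S = ContinuousLinearMap.id ℂ H)
    (hTW : ∀ (j) (x : H), x ∈ Set.range (P j) →
      (Sinv.comp Kad) ((K.comp Sinv) x) ∈ Set.range (P j))
    (hTC : C.comp (K.comp Sinv) = (K.comp Sinv).comp C)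
    (hTC' : C'.comp (K.comp Sinv) = (K.comp Sinv).comp C')
    (Q : J → H →L[ℂ] H)
    (hQ_idem : ∀ j, (Q j).comp (Q j) = Q j)
    (hQ_sa : ∀ (j) (f g : H), (inner A (Q j f) g : A) = inner A f (Q j g))
    (hQ_range : ∀ j, Set.range (Q j) = (K.comp Sinv) '' Set.range (P j)) :
    (∀ f : H,
      Summable (fun j => v j * v j *
        (inner A (Λ j (P j (Sinv (Kad (Q j (C f))))))
          (Λ j (P j (Sinv (Kad (Q j (C' f)))))) : A)) ∧
      (a / b ^ 2) • (inner A (Kad f) (Kad f) : A) ≤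
        (∑' j, v j * v j *
          (inner A (Λ j (P j (Sinv (Kad (Q j (C f))))))
            (Λ j (P j (Sinv (Kad (Q j (C' f)))))) : A)) ∧
      (∑' j, v j * v j *
        (inner A (Λ j (P j (Sinv (Kad (Q j (C f))))))
          (Λ j (P j (Sinv (Kad (Q j (C' f)))))) : A)) ≤
        (b / a ^ 2 * ‖K‖ ^ 2) • (inner A f f : A)) ∧
    (∀ f g : H,
      (∑' j, v j * v j *
        (inner A (Λ j (P j (Sinv (Kad (Q j (C f))))))
          (Λ j (P j (Sinv (Kad (Q j (C' g)))))) : A)) =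
        inner A (K (Sinv (Kad f))) g) := by

  have hKad' : ∀ u z : H, (inner A (Kad u) z : A) = inner A u (K z) := my_adjoint_flip K Kad hKad
  have e1 : ∀ w : H, S (Sinv w) = w := by
    intro w
    have := ContinuousLinearMap.ext_iff.mp hSinv₁ w
    simpa using this
  have key_a : ∀ (j) (u w : H),
      (inner A (Λ j (P j u)) (Λ j (P j w)) : A) = inner A u (P j (Λad j (Λ j (P j w)))) := by
    intro j u w
    rw [hΛad j (P j u) (Λ j (P j w)), hP_sa j u _]
  have key_cC : ∀ (j) (w : H),
      C (P j (Λad j (Λ j (P j w)))) = P j (Λad j (Λ j (P j (C w)))) := by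
    intro j w
    have := ContinuousLinearMap.ext_iff.mp (hCT j) w
    simpa using this
  have key_cC' : ∀ (j) (w : H),
      C' (P j (Λad j (Λ j (P j w)))) = P j (Λad j (Λ j (P j (C' w)))) := by
    intro j w
    have := ContinuousLinearMap.ext_iff.mp (hC'T j) w
    simpa using this
  have hCC'' : ∀ w : H, C (C' w) = C' (C w) := by
    intro w
    have := ContinuousLinearMap.ext_iff.mp hCC' w
    simpa using this
  have star_summand : ∀ (j) (x y : Hs j),
      star (v j * v j * (inner A x y : A)) = v j * v j * (inner A y x : A) := by
    intro j x y
    have hvsa : star (v j) = v j := (IsSelfAdjoint.of_nonneg (hv_pos j)).star_eq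
    rw [star_mul, star_mul, hvsa, CStarModuleOld.star_inner]
    exact ((Commute.mul_left (hv_central j _) (hv_central j _)).eq).symm
  have S_sa : ∀ x y : H, (inner A (S x) y : A) = inner A x (S y) := by
    intro x y
    have lhs : (inner A (S x) y : A)
        = ∑' j, v j * v j * (inner A x (P j (Λad j (Λ j (P j (C (C' y)))))) : A) := by
      rw [hS x y]
      refine tsum_congr fun j => ?_
      rw [key_a j (C x) (C' y), hC_sa, key_cC j (C' y)]
    have rhs : (inner A x (S y) : A)
        = ∑' j, v j * v j * (inner A x (P j (Λad j (Λ j (P j (C (C' y)))))) : A) := by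
      rw [← CStarModuleOld.star_inner, hS y x, tsum_star]
      refine tsum_congr fun j => ?_
      rw [star_summand j _ _, key_a j (C' x) (C y), hC'_sa, key_cC' j (C y), ← hCC'' y]
    rw [lhs, rhs]
  have Sinv_sa : ∀ x y : H, (inner A (Sinv x) y : A) = inner A x (Sinv y) := by
    intro x y
    conv_lhs => rw [← e1 y]
    rw [← S_sa, e1]
  have D_inner : ∀ w z : H, (inner A (Sinv (Kad w)) z : A) = inner A w (K (Sinv z)) := by
    intro w z
    rw [Sinv_sa, hKad']
  have step3 : ∀ (j) (w : H), P j (Sinv (Kad (Q j w))) = P j (Sinv (Kad w)) := by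
    intro j w
    apply my_inner_ext (A := A)
    intro z
    obtain ⟨z', hz'⟩ : K (Sinv (P j z)) ∈ Set.range (Q j) := by
      rw [hQ_range j]
      exact ⟨P j z, ⟨z, rfl⟩, rfl⟩
    have hq2 : Q j (Q j z') = Q j z' := by
      have := ContinuousLinearMap.ext_iff.mp (hQ_idem j) z'
      simpa using this
    rw [hP_sa, D_inner, hP_sa, D_inner, ← hz', hQ_sa, hq2]
  have step4C : ∀ w : H, Sinv (Kad (C w)) = C (Sinv (Kad w)) := by
    intro w
    have hTCz : ∀ z : H, C (K (Sinv z)) = K (Sinv (C z)) := by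
      intro z
      have := ContinuousLinearMap.ext_iff.mp hTC z
      simpa using this
    apply my_inner_ext (A := A)
    intro z
    calc (inner A (Sinv (Kad (C w))) z : A)
        = inner A (C w) (K (Sinv z)) := D_inner _ _
      _ = inner A w (C (K (Sinv z))) := hC_sa _ _
      _ = inner A w (K (Sinv (C z))) := by rw [hTCz]
      _ = inner A (Sinv (Kad w)) (C z) := (D_inner _ _).symm
      _ = inner A (C (Sinv (Kad w))) z := (hC_sa _ _).symm
  have step4C' : ∀ w : H, Sinv (Kad (C' w)) = C' (Sinv (Kad w)) := by
    intro w
    have hTCz : ∀ z : H, C' (K (Sinv z)) = K (Sinv (C' z)) := by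
      intro z
      have := ContinuousLinearMap.ext_iff.mp hTC' z
      simpa using this
    apply my_inner_ext (A := A)
    intro z
    calc (inner A (Sinv (Kad (C' w))) z : A)
        = inner A (C' w) (K (Sinv z)) := D_inner _ _
      _ = inner A w (C' (K (Sinv z))) := hC'_sa _ _
      _ = inner A w (K (Sinv (C' z))) := by rw [hTCz]
      _ = inner A (Sinv (Kad w)) (C' z) := (D_inner _ _).symm
      _ = inner A (C' (Sinv (Kad w))) z := (hC'_sa _ _).symm
  have summand_eq : ∀ (f g : H) (j : J),
      v j * v j * (inner A (Λ j (P j (Sinv (Kad (Q j (C f))))))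
          (Λ j (P j (Sinv (Kad (Q j (C' g)))))) : A)
        = v j * v j * (inner A (Λ j (P j (C (Sinv (Kad f)))))
            (Λ j (P j (C' (Sinv (Kad g))))) : A) := by
    intro f g j
    rw [step3 j (C f), step4C f, step3 j (C' g), step4C' g]
  have sum_eq : ∀ f g : H,
      (∑' j, v j * v j * (inner A (Λ j (P j (Sinv (Kad (Q j (C f))))))
          (Λ j (P j (Sinv (Kad (Q j (C' g)))))) : A))
        = (inner A (S (Sinv (Kad f))) (Sinv (Kad g)) : A) := by
    intro f g
    rw [tsum_congr (summand_eq f g), ← hS (Sinv (Kad f)) (Sinv (Kad g))]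
  have frame_S : ∀ w : H, a • (inner A w w : A) ≤ (inner A (S w) w : A)
      ∧ (inner A (S w) w : A) ≤ b • (inner A w w : A) := by
    intro w
    have := hframe w
    rw [← hS w w] at this
    exact this
  have S_pos : ∀ w : H, (0:A) ≤ inner A (S w) w := fun w =>
    le_trans (smul_nonneg ha.le CStarModuleOld.inner_self_nonneg) (frame_S w).1
  have hb : (0:ℝ) < b := lt_of_lt_of_le ha hab
  have L1 : ∀ h : H, (inner A (S h) (S h) : A) ≤ b • (inner A (S h) h : A) := by
    intro h
    have t1 : (inner A (S (S h)) (S h) : A) ≤ b • inner A (S h) (S h) := (frame_S (S h)).2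
    have t2 : (0:A) ≤ inner A (S (b • h - S h)) (b • h - S h) := S_pos _
    have expand : (inner A (S (b • h - S h)) (b • h - S h) : A)
        = ((b*b) • (inner A (S h) h : A) - b • (inner A (S h) (S h) : A))
          - (b • (inner A (S h) (S h) : A) - (inner A (S (S h)) (S h) : A)) := by
      have eS : S (b • h - S h) = b • S h - S (S h) := by
        rw [map_sub, ContinuousLinearMap.map_smul_of_tower]
      rw [eS]
      simp only [CStarModuleOld.inner_sub_left, CStarModuleOld.inner_sub_right,
        CStarModuleOld.inner_smul_left_real, CStarModuleOld.inner_smul_right_real, smul_smul]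
      rw [show (inner A (S (S h)) h : A) = inner A (S h) (S h) from S_sa (S h) h]
      module
    have t2' : (0:A) ≤ ((b*b) • (inner A (S h) h : A) - b • (inner A (S h) (S h) : A))
        - (b • (inner A (S h) (S h) : A) - (inner A (S (S h)) (S h) : A)) := expand ▸ t2
    have t1' : (0:A) ≤ b • (inner A (S h) (S h) : A) - inner A (S (S h)) (S h) := sub_nonneg.mpr t1
    have hXY : (0:A) ≤ (b*b) • (inner A (S h) h : A) - b • inner A (S h) (S h) := by
      have hadd := add_nonneg t2' t1'
      rwa [sub_add_cancel] at hadd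
    have hb2 : b • (inner A (S h) (S h) : A) ≤ (b*b) • inner A (S h) h := sub_nonneg.mp hXY
    calc (inner A (S h) (S h) : A) = (1/b) • (b • (inner A (S h) (S h) : A)) := by
          rw [smul_smul, one_div, inv_mul_cancel₀ hb.ne', one_smul]
      _ ≤ (1/b) • ((b*b) • (inner A (S h) h : A)) :=
          smul_le_smul_of_nonneg_left hb2 (by positivity)
      _ = b • (inner A (S h) h : A) := by
          rw [smul_smul]
          congr 1
          field_simp
  have L2 : ∀ h : H, a • (inner A (S h) h : A) ≤ (inner A (S h) (S h) : A) := by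
    intro h
    have hw : (0:A) ≤ inner A (S h - a • h) (S h - a • h) := CStarModuleOld.inner_self_nonneg
    have hfr : (0:A) ≤ inner A (S h) h - a • inner A h h := sub_nonneg.mpr (frame_S h).1
    have key : (inner A (S h) (S h) : A) - a • inner A (S h) h
        = inner A (S h - a • h) (S h - a • h) + a • ((inner A (S h) h : A) - a • inner A h h) := by
      simp only [CStarModuleOld.inner_sub_left, CStarModuleOld.inner_sub_right,
        CStarModuleOld.inner_smul_left_real, CStarModuleOld.inner_smul_right_real, smul_sub, smul_smul]
      rw [show (inner A h (S h) : A) = inner A (S h) h from (S_sa h h).symm]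
      module
    have hkey : (0:A) ≤ (inner A (S h) (S h) : A) - a • inner A (S h) h := by
      rw [key]
      exact add_nonneg hw (smul_nonneg ha.le hfr)
    exact sub_nonneg.mp hkey
  refine ⟨fun f => ?_, fun f g => ?_⟩
  · have hsum_ff : (∑' j, v j * v j * (inner A (Λ j (P j (Sinv (Kad (Q j (C f))))))
        (Λ j (P j (Sinv (Kad (Q j (C' f)))))) : A))
        = inner A (S (Sinv (Kad f))) (Sinv (Kad f)) := sum_eq f f
    have hSh : S (Sinv (Kad f)) = Kad f := e1 _
    refine ⟨?_, ?_, ?_⟩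
    · have hfun : (fun j => v j * v j * (inner A (Λ j (P j (Sinv (Kad (Q j (C f))))))
          (Λ j (P j (Sinv (Kad (Q j (C' f)))))) : A))
          = fun j => v j * v j * (inner A (Λ j (P j (C (Sinv (Kad f)))))
              (Λ j (P j (C' (Sinv (Kad f))))) : A) := funext (summand_eq f f)
      rw [hfun]
      exact hsum (Sinv (Kad f))
    · rw [hsum_ff]
      calc (a/b^2) • (inner A (Kad f) (Kad f) : A)
          = (a/b^2) • (inner A (S (Sinv (Kad f))) (S (Sinv (Kad f))) : A) := by rw [hSh]
        _ ≤ (a/b^2) • (b • (inner A (S (Sinv (Kad f))) (Sinv (Kad f)) : A)) :=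
            smul_le_smul_of_nonneg_left (L1 _) (by positivity)
        _ = (a/b) • (inner A (S (Sinv (Kad f))) (Sinv (Kad f)) : A) := by
            rw [smul_smul]
            congr 1
            field_simp
        _ ≤ 1 • (inner A (S (Sinv (Kad f))) (Sinv (Kad f)) : A) :=
            smul_le_smul_of_nonneg_right (by rw [div_le_one hb]; exact hab) (S_pos _)
        _ = inner A (S (Sinv (Kad f))) (Sinv (Kad f)) := one_smul _ _
    · rw [hsum_ff]
      have hscal : (1/a) * ‖K‖^2 ≤ b / a^2 * ‖K‖^2 := by
        have h1 : (1:ℝ)/a ≤ b/a^2 := by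
          rw [div_le_div_iff₀ ha (by positivity)]
          nlinarith
        exact mul_le_mul_of_nonneg_right h1 (sq_nonneg _)
      calc (inner A (S (Sinv (Kad f))) (Sinv (Kad f)) : A)
          = (1/a) • (a • (inner A (S (Sinv (Kad f))) (Sinv (Kad f)) : A)) := by
            rw [smul_smul, one_div, inv_mul_cancel₀ ha.ne', one_smul]
        _ ≤ (1/a) • (inner A (S (Sinv (Kad f))) (S (Sinv (Kad f))) : A) :=
            smul_le_smul_of_nonneg_left (L2 _) (by positivity)
        _ = (1/a) • (inner A (Kad f) (Kad f) : A) := by rw [hSh]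
        _ ≤ (1/a) • ((‖K‖^2 : ℝ) • (inner A f f : A)) :=
            smul_le_smul_of_nonneg_left (my_key_bound K Kad hKad f) (by positivity)
        _ = ((1/a) * ‖K‖^2) • (inner A f f : A) := by rw [smul_smul]
        _ ≤ (b / a^2 * ‖K‖^2) • (inner A f f : A) :=
            smul_le_smul_of_nonneg_right hscal CStarModuleOld.inner_self_nonneg
  · rw [sum_eq f g, e1, ← Sinv_sa, ← hKad]
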